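/- Let λ₁ > 0, λ₂ = 1/λ₁, and let c₁, c₂, c₁₂ be real numbers. Suppose a planar vector field c* = (λ₁/λ₂)c₁ r₁ + (λ₂/λ₁)c₂ r₂ is built from a compatible connector c (∇c symmetric) with c₁ = c·r₁, c₂ = c·r₂, c₁₂ = r₁·(∇c)r₂, where the orthonormal frame (r₁,r₂) satisfies ∇r₁ = r₂⊗c, ∇r₂ = −r₁⊗c, and the stretches λ₁, λ₂ are spatially uniform. Then the skew part of ∇c* equals (λ₁/λ₂ − λ₂/λ₁)(c₂² − c₁² + c₁₂)(r₁⊗r₂ − r₂⊗r₁), and consequently the Gaussian curvature satisfies K = (1/λ₂² − 1/λ₁²)(c₂² − c₁² + c₁₂). -/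

import Mathlib

open Matrix

private lemma hasFDerivAt_dot' {f g : (Fin 2 → ℝ) → (Fin 2 → ℝ)}
    {f' g' : (Fin 2 → ℝ) →L[ℝ] (Fin 2 → ℝ)} {x : Fin 2 → ℝ}
    (hf : HasFDerivAt f f' x) (hg : HasFDerivAt g g' x) :
    HasFDerivAt (fun y => f y ⬝ᵥ g y)
      ((f x 0 • ((ContinuousLinearMap.proj 0 : ((Fin 2 → ℝ)) →L[ℝ] ℝ).comp g') +
        g x 0 • ((ContinuousLinearMap.proj 0 : ((Fin 2 → ℝ)) →L[ℝ] ℝ).comp f')) +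
       (f x 1 • ((ContinuousLinearMap.proj 1 : ((Fin 2 → ℝ)) →L[ℝ] ℝ).comp g') +
        g x 1 • ((ContinuousLinearMap.proj 1 : ((Fin 2 → ℝ)) →L[ℝ] ℝ).comp f'))) x := by
  have h : (fun y => f y ⬝ᵥ g y) = fun y => f y 0 * g y 0 + f y 1 * g y 1 := by
    funext y; simp [dotProduct, Fin.sum_univ_two]
  have hf0 : HasFDerivAt (fun y => f y 0) ((ContinuousLinearMap.proj 0 : ((Fin 2 → ℝ)) →L[ℝ] ℝ).comp f') x :=
    (ContinuousLinearMap.proj 0 : ((Fin 2 → ℝ)) →L[ℝ] ℝ).hasFDerivAt.comp x hf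
  have hf1 : HasFDerivAt (fun y => f y 1) ((ContinuousLinearMap.proj 1 : ((Fin 2 → ℝ)) →L[ℝ] ℝ).comp f') x :=
    (ContinuousLinearMap.proj 1 : ((Fin 2 → ℝ)) →L[ℝ] ℝ).hasFDerivAt.comp x hf
  have hg0 : HasFDerivAt (fun y => g y 0) ((ContinuousLinearMap.proj 0 : ((Fin 2 → ℝ)) →L[ℝ] ℝ).comp g') x :=
    (ContinuousLinearMap.proj 0 : ((Fin 2 → ℝ)) →L[ℝ] ℝ).hasFDerivAt.comp x hg
  have hg1 : HasFDerivAt (fun y => g y 1) ((ContinuousLinearMap.proj 1 : ((Fin 2 → ℝ)) →L[ℝ] ℝ).comp g') x :=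
    (ContinuousLinearMap.proj 1 : ((Fin 2 → ℝ)) →L[ℝ] ℝ).hasFDerivAt.comp x hg
  rw [h]
  exact (hf0.mul hg0).add (hf1.mul hg1)

private lemma parseval' {a b : Fin 2 → ℝ} (haa : a ⬝ᵥ a = 1) (hbb : b ⬝ᵥ b = 1)
    (hab : a ⬝ᵥ b = 0) (u u' : Fin 2 → ℝ) :
    u ⬝ᵥ u' = (a ⬝ᵥ u) * (a ⬝ᵥ u') + (b ⬝ᵥ u) * (b ⬝ᵥ u') := by
  simp only [dotProduct, Fin.sum_univ_two] at *
  set e := a 0 * b 1 - a 1 * b 0 with he_def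
  have hb0 : b 0 = -(e * a 1) := by
    rw [he_def]; linear_combination a 0 * hab - b 0 * haa
  have hb1 : b 1 = e * a 0 := by
    rw [he_def]; linear_combination a 1 * hab - b 1 * haa
  have he : e ^ 2 = 1 := by
    rw [he_def]
    linear_combination (b 0 ^ 2 + b 1 ^ 2) * haa + hbb - (a 0 * b 0 + a 1 * b 1) * hab
  rw [hb0, hb1]
  linear_combination (-(u 0 * u' 0 + u 1 * u' 1)) * haa +
    (-((a 1 * u 0 - a 0 * u 1) * (a 1 * u' 0 - a 0 * u' 1))) * he


/-- Coordinate-free theorema egregium formula (eq:theorema_egregium_reduced):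
for uniform principal stretches `λ₁ > 0`, `λ₂ = 1/λ₁` and a compatible
connector `c` of the orthonormal frame `(r₁, r₂)`, the skew part of `∇c*`
equals `(λ₁/λ₂ − λ₂/λ₁)(c₂² − c₁² + c₁₂)(r₁⊗r₂ − r₂⊗r₁)`, and hence
`K = (1/λ₂² − 1/λ₁²)(c₂² − c₁² + c₁₂)`. -/
theorem theorema_egregium_uniform_stretches
    (lam1 lam2 : ℝ) (hlam1 : 0 < lam1) (hlam2 : lam2 = 1 / lam1)
    (r₁ r₂ c cst : (Fin 2 → ℝ) → (Fin 2 → ℝ)) (K : ℝ)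
    (hr₁r₁ : ∀ x, r₁ x ⬝ᵥ r₁ x = 1) (hr₂r₂ : ∀ x, r₂ x ⬝ᵥ r₂ x = 1)
    (hr₁r₂ : ∀ x, r₁ x ⬝ᵥ r₂ x = 0)
    (hdr₁ : Differentiable ℝ r₁) (hdr₂ : Differentiable ℝ r₂)
    (hdc : Differentiable ℝ c)
    (hgradr₁ : ∀ x v, fderiv ℝ r₁ x v = (c x ⬝ᵥ v) • r₂ x)
    (hgradr₂ : ∀ x v, fderiv ℝ r₂ x v = -((c x ⬝ᵥ v) • r₁ x))
    (hsymc : ∀ x v w, fderiv ℝ c x v ⬝ᵥ w = fderiv ℝ c x w ⬝ᵥ v)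
    (hcst : cst = fun x =>
      (lam1 / lam2 * (c x ⬝ᵥ r₁ x)) • r₁ x + (lam2 / lam1 * (c x ⬝ᵥ r₂ x)) • r₂ x)
    (hK : ∀ x v w,
      fderiv ℝ cst x v ⬝ᵥ w - fderiv ℝ cst x w ⬝ᵥ v =
        lam1 * lam2 * K *
          ((r₂ x ⬝ᵥ v) * (r₁ x ⬝ᵥ w) - (r₁ x ⬝ᵥ v) * (r₂ x ⬝ᵥ w))) :
    (∀ x v w,
      fderiv ℝ cst x v ⬝ᵥ w - fderiv ℝ cst x w ⬝ᵥ v =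
        (lam1 / lam2 - lam2 / lam1) *
          ((c x ⬝ᵥ r₂ x) ^ 2 - (c x ⬝ᵥ r₁ x) ^ 2 + r₁ x ⬝ᵥ fderiv ℝ c x (r₂ x)) *
          ((r₂ x ⬝ᵥ v) * (r₁ x ⬝ᵥ w) - (r₁ x ⬝ᵥ v) * (r₂ x ⬝ᵥ w))) ∧
    (∀ x, K =
      (1 / lam2 ^ 2 - 1 / lam1 ^ 2) *
        ((c x ⬝ᵥ r₂ x) ^ 2 - (c x ⬝ᵥ r₁ x) ^ 2 + r₁ x ⬝ᵥ fderiv ℝ c x (r₂ x))) := by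
  have hkey : ∀ x v w, fderiv ℝ cst x v ⬝ᵥ w =
      lam1 / lam2 * (c x ⬝ᵥ r₁ x) * ((c x ⬝ᵥ v) * (r₂ x ⬝ᵥ w))
      + lam1 / lam2 * (fderiv ℝ c x v ⬝ᵥ r₁ x + (c x ⬝ᵥ v) * (c x ⬝ᵥ r₂ x)) * (r₁ x ⬝ᵥ w)
      - lam2 / lam1 * (c x ⬝ᵥ r₂ x) * ((c x ⬝ᵥ v) * (r₁ x ⬝ᵥ w))
      + lam2 / lam1 * (fderiv ℝ c x v ⬝ᵥ r₂ x - (c x ⬝ᵥ v) * (c x ⬝ᵥ r₁ x)) * (r₂ x ⬝ᵥ w) := by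
    subst hcst
    intro x v w
    have hc' := (hdc x).hasFDerivAt
    have hr1' := (hdr₁ x).hasFDerivAt
    have hr2' := (hdr₂ x).hasFDerivAt
    have hD := (((hasFDerivAt_dot' hc' hr1').const_mul (lam1/lam2)).smul hr1').add
      (((hasFDerivAt_dot' hc' hr2').const_mul (lam2/lam1)).smul hr2')
    rw [HasFDerivAt.fderiv (f := fun y => (lam1 / lam2 * (c y ⬝ᵥ r₁ y)) • r₁ y + (lam2 / lam1 * (c y ⬝ᵥ r₂ y)) • r₂ y) hD]
    simp only [ContinuousLinearMap.add_apply, ContinuousLinearMap.coe_smul', Pi.smul_apply,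
      ContinuousLinearMap.smulRight_apply, ContinuousLinearMap.comp_apply,
      ContinuousLinearMap.proj_apply, hgradr₁, hgradr₂, smul_eq_mul]
    simp only [dotProduct, Fin.sum_univ_two, Pi.add_apply, Pi.smul_apply, Pi.neg_apply,
      smul_eq_mul, neg_mul, mul_neg]
    ring
  have part1 : ∀ x v w,
      fderiv ℝ cst x v ⬝ᵥ w - fderiv ℝ cst x w ⬝ᵥ v =
        (lam1 / lam2 - lam2 / lam1) *
          ((c x ⬝ᵥ r₂ x) ^ 2 - (c x ⬝ᵥ r₁ x) ^ 2 + r₁ x ⬝ᵥ fderiv ℝ c x (r₂ x)) *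
          ((r₂ x ⬝ᵥ v) * (r₁ x ⬝ᵥ w) - (r₁ x ⬝ᵥ v) * (r₂ x ⬝ᵥ w)) := by
    intro x v w
    rw [hkey x v w, hkey x w v,
      hsymc x v (r₁ x), hsymc x v (r₂ x), hsymc x w (r₁ x), hsymc x w (r₂ x)]
    have hcv := parseval' (hr₁r₁ x) (hr₂r₂ x) (hr₁r₂ x) (c x) v
    have hcw := parseval' (hr₁r₁ x) (hr₂r₂ x) (hr₁r₂ x) (c x) w
    have hg1v := parseval' (hr₁r₁ x) (hr₂r₂ x) (hr₁r₂ x) (fderiv ℝ c x (r₁ x)) v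
    have hg1w := parseval' (hr₁r₁ x) (hr₂r₂ x) (hr₁r₂ x) (fderiv ℝ c x (r₁ x)) w
    have hg2v := parseval' (hr₁r₁ x) (hr₂r₂ x) (hr₁r₂ x) (fderiv ℝ c x (r₂ x)) v
    have hg2w := parseval' (hr₁r₁ x) (hr₂r₂ x) (hr₁r₂ x) (fderiv ℝ c x (r₂ x)) w
    have hs := hsymc x (r₁ x) (r₂ x)
    simp only [dotProduct, Fin.sum_univ_two] at hcv hcw hg1v hg1w hg2v hg2w hs ⊢
    linear_combination
      ((lam1/lam2 - lam2/lam1) *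
        ((c x 0 * r₁ x 0 + c x 1 * r₁ x 1) * (r₂ x 0 * w 0 + r₂ x 1 * w 1)
         + (c x 0 * r₂ x 0 + c x 1 * r₂ x 1) * (r₁ x 0 * w 0 + r₁ x 1 * w 1))) * hcv
      - ((lam1/lam2 - lam2/lam1) *
        ((c x 0 * r₁ x 0 + c x 1 * r₁ x 1) * (r₂ x 0 * v 0 + r₂ x 1 * v 1)
         + (c x 0 * r₂ x 0 + c x 1 * r₂ x 1) * (r₁ x 0 * v 0 + r₁ x 1 * v 1))) * hcw
      + (lam1/lam2 * (r₁ x 0 * w 0 + r₁ x 1 * w 1)) * hg1v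
      - (lam1/lam2 * (r₁ x 0 * v 0 + r₁ x 1 * v 1)) * hg1w
      + (lam2/lam1 * (r₂ x 0 * w 0 + r₂ x 1 * w 1)) * hg2v
      - (lam2/lam1 * (r₂ x 0 * v 0 + r₂ x 1 * v 1)) * hg2w
      + (lam1/lam2 *
          ((r₂ x 0 * v 0 + r₂ x 1 * v 1) * (r₁ x 0 * w 0 + r₁ x 1 * w 1)
           - (r₁ x 0 * v 0 + r₁ x 1 * v 1) * (r₂ x 0 * w 0 + r₂ x 1 * w 1))) * hs
  refine ⟨part1, fun x => ?_⟩
  have h1 := hK x (r₂ x) (r₁ x)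
  have h2 := part1 x (r₂ x) (r₁ x)
  rw [h1] at h2
  have hc21 : r₂ x ⬝ᵥ r₁ x = 0 := by rw [dotProduct_comm]; exact hr₁r₂ x
  rw [hr₂r₂ x, hr₁r₁ x, hr₁r₂ x, hc21] at h2
  have h0 : lam1 ≠ 0 := ne_of_gt hlam1
  subst hlam2
  field_simp at h2 ⊢
  linarith [h2]
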